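/- Let A and B be subsets of a finite abelian group G, and suppose A is periodic with subgroup of periods H (i.e. H = {h ∈ G : A + h = A} is nontrivial). Then G = A ⊕ B if and only if G/H = (A/H) ⊕ (B/H) and (B − B) ∩ H = {0}. -/

import Mathlib

open Pointwise

theorem stmt_2 {G : Type*} [AddCommGroup G] [Fintype G]
    (A B : Set G) (H : AddSubgroup G)
    (hH : ∀ h : G, h ∈ H ↔ (fun x => x + h) '' A = A)
    (hne : H ≠ ⊥) :
    (∀ g : G, ∃! ab : G × G, ab.1 ∈ A ∧ ab.2 ∈ B ∧ ab.1 + ab.2 = g) ↔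
      ((∀ q : G ⧸ H, ∃! ab : (G ⧸ H) × (G ⧸ H),
          ab.1 ∈ ((QuotientAddGroup.mk : G → G ⧸ H) '' A) ∧
          ab.2 ∈ ((QuotientAddGroup.mk : G → G ⧸ H) '' B) ∧ ab.1 + ab.2 = q) ∧
        (B - B) ∩ (H : Set G) = {0}) := by
  have hsat : ∀ {a h : G}, a ∈ A → h ∈ H → a + h ∈ A := by
    intro a h ha hh
    have := (hH h).mp hh
    rw [← this]
    exact ⟨a, ha, rfl⟩
  constructor
  · intro hd
    obtain ⟨⟨a0, b0⟩, ⟨ha0, hb0, hab0⟩, -⟩ := hd 0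
    constructor
    · intro q
      obtain ⟨g, rfl⟩ := QuotientAddGroup.mk_surjective q
      obtain ⟨⟨a, b⟩, ⟨ha, hb, hab⟩, huniq⟩ := hd g
      refine ⟨(QuotientAddGroup.mk a, QuotientAddGroup.mk b),
        ⟨⟨a, ha, rfl⟩, ⟨b, hb, rfl⟩, by
          show ((a + b : G) : G ⧸ H) = (g : G ⧸ H); rw [hab]⟩, ?_⟩
      rintro ⟨qa, qb⟩ ⟨⟨a', ha', rfl⟩, ⟨b', hb', rfl⟩, hsum⟩
      have hmem : -(a' + b') + g ∈ H := by
        rw [← QuotientAddGroup.eq]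
        exact hsum
      set h := -(a' + b') + g with hhdef
      have ha'' : a' + h ∈ A := hsat ha' hmem
      have hsum' : (a' + h) + b' = g := by rw [hhdef]; abel
      have heq := huniq (a' + h, b') ⟨ha'', hb', hsum'⟩
      have h1 : a' + h = a := congrArg Prod.fst heq
      have h2 : b' = b := congrArg Prod.snd heq
      have hfst : ((a' : G ⧸ H)) = ((a' + h : G) : G ⧸ H) :=
        (QuotientAddGroup.eq).mpr (by simpa using hmem)
      refine Prod.ext ?_ ?_
      · show ((a' : G ⧸ H)) = ((a : G) : G ⧸ H)
        rw [hfst, h1]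
      · show ((b' : G ⧸ H)) = ((b : G) : G ⧸ H)
        rw [h2]
    · ext x
      simp only [Set.mem_inter_iff, Set.mem_singleton_iff]
      constructor
      · rintro ⟨hx, hxH⟩
        obtain ⟨b, hb, b', hb', rfl⟩ := Set.mem_sub.mp hx
        obtain ⟨⟨a1, b1⟩, -, huniq⟩ := hd (a0 + b)
        have e1 : ((a0 : G), b) = (a1, b1) := huniq _ ⟨ha0, hb, rfl⟩
        have e2 : ((a0 + (b - b') : G), b') = (a1, b1) :=
          huniq _ ⟨hsat ha0 hxH, hb', by show a0 + (b - b') + b' = a0 + b; abel⟩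
        have : a0 + (b - b') = a0 := by
          have := (congrArg Prod.fst e2).trans (congrArg Prod.fst e1).symm
          simpa using this
        have := congrArg (fun y => y - a0) this
        simpa using this
      · rintro rfl
        exact ⟨Set.mem_sub.mpr ⟨b0, hb0, b0, hb0, by abel⟩, H.zero_mem⟩
  · rintro ⟨hq, hBB⟩ g
    obtain ⟨⟨qa, qb⟩, ⟨⟨a, ha, rfl⟩, ⟨b, hb, rfl⟩, hsum⟩, huq⟩ := hq (g : G ⧸ H)
    have hmem : -(a + b) + g ∈ H := by
      rw [← QuotientAddGroup.eq]
      exact hsum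
    set h := -(a + b) + g with hhdef
    refine ⟨(a + h, b), ⟨hsat ha hmem, hb, ?_⟩, ?_⟩
    · show a + h + b = g
      rw [hhdef]; abel
    rintro ⟨a1, b1⟩ ⟨ha1, hb1, hsum1⟩
    have heq := huq ((a1 : G ⧸ H), (b1 : G ⧸ H))
      ⟨⟨a1, ha1, rfl⟩, ⟨b1, hb1, rfl⟩, by
        show ((a1 + b1 : G) : G ⧸ H) = (g : G ⧸ H); rw [hsum1]⟩
    have hb1b : (b1 : G ⧸ H) = (b : G ⧸ H) := congrArg Prod.snd heq
    have hbH : b1 - b ∈ H := by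
      have h' : -(-b1 + b) ∈ H := H.neg_mem ((QuotientAddGroup.eq).mp hb1b)
      have he : b1 - b = -(-b1 + b) := by abel
      rw [he]; exact h'
    have hb1eq : b1 = b := by
      have : b1 - b ∈ (B - B) ∩ (H : Set G) :=
        ⟨Set.mem_sub.mpr ⟨b1, hb1, b, hb, rfl⟩, hbH⟩
      rw [hBB] at this
      have := Set.mem_singleton_iff.mp this
      linear_combination (norm := abel) this
    have ha1eq : a1 = a + h := by
      have : a1 + b1 = (a + h) + b := by rw [hsum1, hhdef]; abel
      rw [hb1eq] at this
      exact add_right_cancel this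
    exact Prod.ext ha1eq hb1eq
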